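/- Let p ≥ 3 and (u_m) satisfy u_{m+1} = 1 - u_m^{p-1} with u_0 ∈ (0, α_p), α_p the unique root of x^{p-1}+x-1=0 in [0,1]. Then the subsequence (u_{2m}) is strictly decreasing and converges to 0, and (u_{2m+1}) is strictly increasing and converges to 1. -/

import Mathlib

open Finset Filter

/-- No solution of `(1-x^q)^q = 1-x` in `(0, α)`. -/
lemma stmt8_nzero (q : ℕ) (hq : 2 ≤ q) (α : ℝ) (hα1 : α < 1)
    (hroot : α ^ q + α - 1 = 0) (x : ℝ) (hx0 : 0 < x) (hxα : x < α) :
    (1 - x ^ q) ^ q ≠ 1 - x := by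
  intro h
  set y := 1 - x ^ q with hy
  have hx1 : x < 1 := hxα.trans hα1
  have hxq_pos : 0 < x ^ q := pow_pos hx0 q
  have hxq_lt : x ^ q < 1 := pow_lt_one₀ hx0.le hx1 (by omega)
  have hy0 : 0 < y := by simp only [hy]; linarith
  have hy1 : y < 1 := by simp only [hy]; linarith
  by_cases hxy : y = x
  · -- then x is a fixed point, but x < α and t^q + t strictly increasing
    have h1 : x ^ q < α ^ q := pow_lt_pow_left₀ hxα hx0.le (by omega)
    have : x ^ q + x - 1 = 0 := by simp only [hy] at hxy; linarith
    linarith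
  · -- geometric sum identity gives T = 1
    have hid : (∑ i ∈ range q, y ^ i * x ^ (q - 1 - i)) * (y - x) = y ^ q - x ^ q :=
      geom_sum₂_mul y x q
    have hxq_eq : x ^ q = 1 - y := by simp only [hy]; ring
    have h2 : y ^ q - x ^ q = y - x := by rw [h, hxq_eq]; ring
    have hT : (∑ i ∈ range q, y ^ i * x ^ (q - 1 - i)) = 1 := by
      have := mul_right_cancel₀ (sub_ne_zero.2 hxy) (by rw [hid, h2, one_mul] : (∑ i ∈ range q, y ^ i * x ^ (q - 1 - i)) * (y - x) = 1 * (y - x))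
      exact this
    -- but T > y^(q-1) * ∑ x^j = y^q/(1-x) = 1
    have hlt : (∑ i ∈ range q, y ^ (q - 1) * x ^ (q - 1 - i)) <
        ∑ i ∈ range q, y ^ i * x ^ (q - 1 - i) := by
      apply Finset.sum_lt_sum
      · intro i hi
        have hi' : i ≤ q - 1 := by have := Finset.mem_range.1 hi; omega
        exact mul_le_mul_of_nonneg_right (pow_le_pow_of_le_one hy0.le hy1.le hi')
          (pow_nonneg hx0.le _)
      · refine ⟨q - 2, Finset.mem_range.2 (by omega), ?_⟩
        have he : q - 1 - (q - 2) = 1 := by omega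
        rw [he]
        have : y ^ (q - 1) < y ^ (q - 2) :=
          pow_lt_pow_right_of_lt_one₀ hy0 hy1 (by omega)
        have hx1' : x ^ 1 = x := pow_one x
        rw [hx1']
        exact mul_lt_mul_of_pos_right this hx0
    have hsum : (∑ i ∈ range q, y ^ (q - 1) * x ^ (q - 1 - i)) =
        y ^ (q - 1) * ∑ j ∈ range q, x ^ j := by
      rw [← Finset.mul_sum]
      congr 1
      exact Finset.sum_range_reflect (fun j => x ^ j) q
    have hgeom : (∑ j ∈ range q, x ^ j) * (x - 1) = x ^ q - 1 := geom_sum_mul x q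
    have h1x : (0 : ℝ) < 1 - x := by linarith
    have hyq : y ^ (q - 1) * y = y ^ q := by
      rw [← pow_succ]; congr 1; omega
    -- y^(q-1) * ∑ x^j = 1
    have hval : y ^ (q - 1) * ∑ j ∈ range q, x ^ j = 1 := by
      have hs : (∑ j ∈ range q, x ^ j) * (1 - x) = y := by
        simp only [hy]; nlinarith [hgeom]
      have : (y ^ (q - 1) * ∑ j ∈ range q, x ^ j) * (1 - x) = 1 * (1 - x) := by
        rw [mul_assoc, hs, hyq, h, one_mul]
      exact mul_right_cancel₀ (by linarith) this
    rw [hsum, hval] at hlt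
    rw [hT] at hlt
    exact lt_irrefl _ hlt

/-- Key: `1 - (1-x^q)^q < x` on `(0, α)`. -/
lemma stmt8_key (q : ℕ) (hq : 2 ≤ q) (α : ℝ) (hα1 : α < 1)
    (hroot : α ^ q + α - 1 = 0) (x : ℝ) (hx0 : 0 < x) (hxα : x < α) :
    1 - (1 - x ^ q) ^ q < x := by
  set F : ℝ → ℝ := fun t => 1 - t - (1 - t ^ q) ^ q with hF
  suffices h : F x < 0 by simp only [hF] at h; linarith
  by_contra hpos
  push_neg at hpos
  have hne : F x ≠ 0 := by
    intro h
    exact stmt8_nzero q hq α hα1 hroot x hx0 hxα (by simp only [hF] at h; linarith)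
  have hFx : 0 < F x := lt_of_le_of_ne hpos (Ne.symm hne)
  set x₀ : ℝ := min (x / 2) (1 / (2 * q)) with hx₀def
  have hq0 : (0:ℝ) < q := by positivity
  have hx₀pos : 0 < x₀ := lt_min (by linarith) (by positivity)
  have hx₀lt : x₀ < x := lt_of_le_of_lt (min_le_left _ _) (by linarith)
  have hx₀le : x₀ ≤ 1 / (2 * q) := min_le_right _ _
  have hx₀1 : x₀ ≤ 1 := by
    have : (1:ℝ) / (2 * q) ≤ 1 := by
      rw [div_le_one (by positivity)]
      have h2q : (2:ℝ) ≤ q := by exact_mod_cast hq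
      nlinarith
    linarith
  -- F x₀ < 0 by Bernoulli
  have hFx₀ : F x₀ < 0 := by
    have hb : 1 + (q : ℝ) * (-(x₀ ^ q)) ≤ (1 + -(x₀ ^ q)) ^ q := by
      apply one_add_mul_le_pow
      have : x₀ ^ q ≤ 1 := pow_le_one₀ hx₀pos.le hx₀1
      linarith
    have hpow : x₀ ^ q = x₀ ^ (q - 1) * x₀ := by
      rw [← pow_succ]; congr 1; omega
    have hsmall : x₀ ^ (q - 1) ≤ x₀ := pow_le_of_le_one hx₀pos.le hx₀1 (by omega)
    have h1 : (q : ℝ) * x₀ ^ q ≤ (q : ℝ) * (x₀ * x₀) := by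
      rw [hpow]
      have := mul_le_mul_of_nonneg_right hsmall hx₀pos.le
      nlinarith
    have h2 : (q : ℝ) * (x₀ * x₀) < x₀ := by
      have : (q : ℝ) * x₀ ≤ 1 / 2 := by
        rw [hx₀def]
        calc (q : ℝ) * min (x / 2) (1 / (2 * q)) ≤ (q : ℝ) * (1 / (2 * q)) := by
              exact mul_le_mul_of_nonneg_left (min_le_right _ _) hq0.le
          _ = 1 / 2 := by field_simp
      nlinarith
    simp only [hF]
    have : 1 - (q : ℝ) * x₀ ^ q ≤ (1 - x₀ ^ q) ^ q := by
      have e : (1 : ℝ) - x₀ ^ q = 1 + -x₀ ^ q := by ring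
      rw [e]; linarith
    nlinarith
  -- IVT gives a zero in (x₀, x) ⊆ (0, α): contradiction
  have hcont : Continuous F := by
    simp only [hF]; continuity
  have hsub : Set.Icc (F x₀) (F x) ⊆ F '' Set.Icc x₀ x :=
    intermediate_value_Icc hx₀lt.le hcont.continuousOn
  obtain ⟨c, hc, hFc⟩ := hsub ⟨hFx₀.le, hFx.le⟩
  have hc0 : 0 < c := lt_of_lt_of_le hx₀pos hc.1
  have hcα : c < α := lt_of_le_of_lt hc.2 hxα
  exact stmt8_nzero q hq α hα1 hroot c hc0 hcα (by simp only [hF] at hFc; linarith)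

theorem stmt_8 (p : ℕ) (hp : 3 ≤ p) (α : ℝ) (hα : α ∈ Set.Ioo (0:ℝ) 1)
    (hroot : α ^ (p - 1) + α - 1 = 0) (u : ℕ → ℝ) (h0 : u 0 ∈ Set.Ioo 0 α)
    (hrec : ∀ m, u (m + 1) = 1 - u m ^ (p - 1)) :
    StrictAnti (fun m => u (2 * m)) ∧
    Filter.Tendsto (fun m => u (2 * m)) Filter.atTop (nhds 0) ∧
    StrictMono (fun m => u (2 * m + 1)) ∧
    Filter.Tendsto (fun m => u (2 * m + 1)) Filter.atTop (nhds 1) := by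
  obtain ⟨hα0, hα1⟩ := hα
  set q := p - 1 with hqdef
  have hq : 2 ≤ q := by omega
  -- the one-step map on even indices
  have hstep : ∀ x : ℝ, x ∈ Set.Ioo (0:ℝ) α →
      (1 - (1 - x ^ q) ^ q) ∈ Set.Ioo (0:ℝ) α ∧ 1 - (1 - x ^ q) ^ q < x := by
    rintro x ⟨hx0, hxα⟩
    have hx1 : x < 1 := hxα.trans hα1
    have hxq_pos : 0 < x ^ q := pow_pos hx0 q
    have hxq_le : x ^ q < 1 := pow_lt_one₀ hx0.le hx1 (by omega)
    have hy1 : (1 - x ^ q) ^ q < 1 :=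
      pow_lt_one₀ (by linarith) (by linarith) (by omega)
    have hkey := stmt8_key q hq α hα1 hroot x hx0 hxα
    exact ⟨⟨by linarith, hkey.trans hxα⟩, hkey⟩
  -- double-step recursion
  have hrec2 : ∀ m, u (2 * (m + 1)) = 1 - (1 - u (2 * m) ^ q) ^ q := by
    intro m
    have e1 : 2 * (m + 1) = (2 * m + 1) + 1 := by ring
    rw [e1, hrec (2 * m + 1), hrec (2 * m)]
  -- all even terms in (0, α)
  have hA : ∀ m, u (2 * m) ∈ Set.Ioo (0:ℝ) α := by
    intro m
    induction m with
    | zero => simpa using h0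
    | succ n ih =>
      rw [hrec2 n]
      exact (hstep _ ih).1
  have hdec : ∀ m, u (2 * (m + 1)) < u (2 * m) := by
    intro m
    rw [hrec2 m]
    exact (hstep _ (hA m)).2
  have hanti : StrictAnti (fun m => u (2 * m)) :=
    strictAnti_nat_of_succ_lt fun n => hdec n
  have hbdd : BddBelow (Set.range fun m => u (2 * m)) := by
    refine ⟨0, ?_⟩
    rintro t ⟨m, rfl⟩
    exact (hA m).1.le
  have htend : Tendsto (fun m => u (2 * m)) atTop (nhds (⨅ m, u (2 * m))) :=
    tendsto_atTop_ciInf hanti.antitone hbdd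
  set L := ⨅ m, u (2 * m) with hLdef
  have hL0 : 0 ≤ L := le_ciInf fun m => (hA m).1.le
  have hLα : L < α := lt_of_le_of_lt (ciInf_le hbdd 0) (hA 0).2
  have hcontg : Continuous (fun t : ℝ => 1 - (1 - t ^ q) ^ q) := by continuity
  have h2 : Tendsto (fun m => u (2 * (m + 1))) atTop (nhds L) := by
    have := htend.comp (tendsto_add_atTop_nat 1)
    convert this using 2
    rfl
  have h3 : Tendsto (fun m => u (2 * (m + 1))) atTop (nhds (1 - (1 - L ^ q) ^ q)) := by
    have := (hcontg.tendsto L).comp htend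
    convert this using 1
    funext m
    exact hrec2 m
  have hfix : 1 - (1 - L ^ q) ^ q = L := tendsto_nhds_unique h3 h2
  have hL : L = 0 := by
    by_contra hne
    have hLpos : 0 < L := lt_of_le_of_ne hL0 (Ne.symm hne)
    exact stmt8_nzero q hq α hα1 hroot L hLpos hLα (by linarith)
  rw [hL] at htend
  refine ⟨hanti, htend, ?_, ?_⟩
  · -- odd terms strictly increasing
    apply strictMono_nat_of_lt_succ
    intro n
    have h1 := hrec (2 * n)
    have h2 := hrec (2 * (n + 1))
    have hlt := hdec n
    have hpos := (hA (n + 1)).1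
    have hpow : u (2 * (n + 1)) ^ q < u (2 * n) ^ q :=
      pow_lt_pow_left₀ hlt hpos.le (by omega)
    show u (2 * n + 1) < u (2 * (n + 1) + 1)
    rw [h1, h2]
    linarith
  · -- odd terms tend to 1
    have hpowt : Tendsto (fun m => u (2 * m) ^ q) atTop (nhds 0) := by
      have := htend.pow q
      simpa [zero_pow (by omega : q ≠ 0)] using this
    have : Tendsto (fun m => 1 - u (2 * m) ^ q) atTop (nhds (1 - 0)) :=
      tendsto_const_nhds.sub hpowt
    simp only [sub_zero] at this
    convert this using 1
    funext m
    exact hrec (2 * m)
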